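/- Let P and Q be orthogonal projections on a complex Hilbert space H. Then M_10(P,Q) = M_01(P,Q) = {0} and ||P - Q|| = 1 hold if and only if Ran Q = G(Ran P, X) for a closed densely defined operator X from Ran P to (Ran P)^perp that is unbounded, i.e., not norm-continuous on its domain. -/

import Mathlib

open scoped ComplexConjugate
set_option linter.unusedSectionVars false
set_option maxHeartbeats 4000000
open scoped NNReal

section AuxHelpers

variable {H : Type*} [NormedAddCommGroup H] [InnerProductSpace ℂ H] [CompleteSpace H]

local notation "⟪" x ", " y "⟫" => @inner ℂ _ _ x y

private lemma aux_idem_apply {P : H →L[ℂ] H} (hP : IsIdempotentElem P) (x : H) :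
    P (P x) = P x := by
  have := ContinuousLinearMap.ext_iff.mp hP x
  simpa [ContinuousLinearMap.mul_apply] using this

private lemma aux_mem_range {P : H →L[ℂ] H} (hP : IsIdempotentElem P) {x : H} :
    x ∈ LinearMap.range (P : H →ₗ[ℂ] H) ↔ P x = x := by
  constructor
  · rintro ⟨y, rfl⟩; exact aux_idem_apply hP y
  · intro h; exact ⟨x, h⟩

private lemma aux_symm {P : H →L[ℂ] H} (hPsa : IsSelfAdjoint P) (x y : H) :
    ⟪P x, y⟫ = ⟪x, P y⟫ := by
  have := hPsa.isSymmetric x y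
  simpa using this

private lemma aux_range_closed {P : H →L[ℂ] H} (hP : IsIdempotentElem P) :
    IsClosed ((LinearMap.range (P : H →ₗ[ℂ] H) : Submodule ℂ H) : Set H) := by
  have : ((LinearMap.range (P : H →ₗ[ℂ] H) : Submodule ℂ H) : Set H) = {x | P x = x} := by
    ext x; simpa using aux_mem_range hP
  rw [this]
  exact isClosed_eq P.continuous continuous_id

private lemma aux_sub_mem_orth {P : H →L[ℂ] H} (hP : IsIdempotentElem P)
    (hPsa : IsSelfAdjoint P) (f : H) : f - P f ∈ (LinearMap.range (P : H →ₗ[ℂ] H))ᗮ := by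
  intro u hu
  have hu' : P u = u := (aux_mem_range hP).mp hu
  rw [inner_sub_right, ← aux_symm hPsa, hu', sub_self]

private lemma aux_apply_orth_eq_zero {P : H →L[ℂ] H} (hP : IsIdempotentElem P)
    (hPsa : IsSelfAdjoint P) {x : H} (hx : x ∈ (LinearMap.range (P : H →ₗ[ℂ] H))ᗮ) : P x = 0 := by
  have h1 : ⟪P x, P x⟫ = ⟪x, P x⟫ := by
    rw [aux_symm hPsa, aux_idem_apply hP]
  have h2 : ⟪P x, x⟫ = 0 := hx (P x) ⟨x, rfl⟩
  have h3 : ⟪x, P x⟫ = 0 := by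
    rw [← inner_conj_symm, h2, map_zero]
  rw [h3] at h1
  exact inner_self_eq_zero.mp h1

private lemma aux_pyth {P : H →L[ℂ] H} (hP : IsIdempotentElem P)
    (hPsa : IsSelfAdjoint P) (f : H) :
    ‖f‖ * ‖f‖ = ‖P f‖ * ‖P f‖ + ‖f - P f‖ * ‖f - P f‖ := by
  have horth : ⟪P f, f - P f⟫ = 0 := aux_sub_mem_orth hP hPsa f (P f) ⟨f, rfl⟩
  have := norm_add_sq_eq_norm_sq_add_norm_sq_of_inner_eq_zero (P f) (f - P f) horth
  simpa [add_sub_cancel] using this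

private lemma aux_le_of_sq_le_sq {x y : ℝ} (hx : 0 ≤ x) (hy : 0 ≤ y)
    (h : x * x ≤ y * y) : x ≤ y := by nlinarith

private lemma aux_decomp {P Q : H →L[ℂ] H} (hP : IsIdempotentElem P)
    (hPsa : IsSelfAdjoint P) (f : H) :
    ‖(P - Q) f‖ * ‖(P - Q) f‖
      = ‖P (f - Q f)‖ * ‖P (f - Q f)‖ + ‖Q f - P (Q f)‖ * ‖Q f - P (Q f)‖ := by
  have hab : (P - Q) f = P (f - Q f) + -(Q f - P (Q f)) := by
    simp only [ContinuousLinearMap.sub_apply, map_sub]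
    abel
  have hborth : Q f - P (Q f) ∈ (LinearMap.range (P : H →ₗ[ℂ] H))ᗮ := aux_sub_mem_orth hP hPsa (Q f)
  have horth : ⟪P (f - Q f), -(Q f - P (Q f))⟫ = 0 := by
    rw [inner_neg_right, hborth (P (f - Q f)) ⟨f - Q f, rfl⟩, neg_zero]
  have := norm_add_sq_eq_norm_sq_add_norm_sq_of_inner_eq_zero _ _ horth
  rw [hab, this, norm_neg]

private lemma aux_norm_sub_le_one {P Q : H →L[ℂ] H} (hP : IsIdempotentElem P)
    (hPsa : IsSelfAdjoint P) (hQ : IsIdempotentElem Q) (hQsa : IsSelfAdjoint Q) :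
    ‖P - Q‖ ≤ 1 := by
  refine ContinuousLinearMap.opNorm_le_bound _ zero_le_one fun f => ?_
  rw [one_mul]
  have hd := aux_decomp (Q := Q) hP hPsa f
  have h1 := aux_pyth hP hPsa (f - Q f)
  have h2 := aux_pyth hP hPsa (Q f)
  have h3 := aux_pyth hQ hQsa f
  refine aux_le_of_sq_le_sq (norm_nonneg _) (norm_nonneg _) ?_
  nlinarith [norm_nonneg (f - Q f - P (f - Q f)), norm_nonneg (P (Q f))]

private lemma aux_two_max {x a b m : ℝ} (hx : 0 ≤ x) (hm : 0 ≤ m)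
    (h : x * x = a * a + b * b) (ha : a ≤ m) (hb : b ≤ m)
    (ha0 : 0 ≤ a) (hb0 : 0 ≤ b) : x ≤ 2 * m := by
  refine aux_le_of_sq_le_sq hx (by positivity) ?_
  nlinarith

private lemma aux_sqrt_bound {x p b C : ℝ} (hx : 0 ≤ x) (hp : 0 ≤ p) (hC : 0 ≤ C)
    (hpy : x * x = p * p + b * b) (hb : b ≤ C * p) (hb0 : 0 ≤ b) :
    x ≤ Real.sqrt (1 + C ^ 2) * p := by
  have hs2 : Real.sqrt (1 + C ^ 2) ^ 2 = 1 + C ^ 2 := Real.sq_sqrt (by positivity)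
  refine aux_le_of_sq_le_sq hx (by positivity) ?_
  nlinarith [mul_le_mul hb hb hb0 (by positivity : (0:ℝ) ≤ C * p)]

private lemma aux_sq1 {b p q C : ℝ} (hb : 0 ≤ b) (hC : 0 ≤ C)
    (h1 : b ≤ C * p) (h2 : q * q = p * p + b * b) :
    (1 + C ^ 2) * (b * b) ≤ C ^ 2 * (q * q) := by
  nlinarith [mul_le_mul h1 h1 hb (by nlinarith : (0:ℝ) ≤ C * p)]

private lemma aux_sq2 {a d h C : ℝ} (ha : 0 ≤ a) (hd : 0 ≤ d) (hC : 0 ≤ C)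
    (h1 : a * a ≤ C * a * d) (h2 : h * h = a * a + d * d) :
    (1 + C ^ 2) * (a * a) ≤ C ^ 2 * (h * h) := by
  nlinarith [mul_self_nonneg (a - C * d)]

private lemma aux_combine {PQ A B qf hh F C s : ℝ}
    (hd : PQ * PQ = A * A + B * B)
    (h1 : (1 + C ^ 2) * (A * A) ≤ C ^ 2 * (hh * hh))
    (h2 : (1 + C ^ 2) * (B * B) ≤ C ^ 2 * (qf * qf))
    (hpyQ : F * F = qf * qf + hh * hh)
    (hs2 : s ^ 2 = 1 + C ^ 2) (hs : 0 < s) (hC : 0 ≤ C)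
    (hPQ : 0 ≤ PQ) (hF : 0 ≤ F) : PQ ≤ C / s * F := by
  refine aux_le_of_sq_le_sq hPQ (by positivity) ?_
  have hrhs : (C / s * F) * (C / s * F) = (C ^ 2 * (F * F)) / s ^ 2 := by
    field_simp
  rw [hrhs, le_div_iff₀ (by positivity : (0:ℝ) < s ^ 2)]
  nlinarith

end AuxHelpers

local notation "⟪" x ", " y "⟫" => @inner ℂ _ _ x y

/-- Let `P` and `Q` be orthogonal projections on a complex Hilbert space `H`.
Then `M₁₀(P,Q) = M₀₁(P,Q) = {0}` and `‖P - Q‖ = 1` hold iff `Ran Q = G(Ran P, X)` for a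
closed densely defined operator `X` from `Ran P` to `(Ran P)ᗮ` which is unbounded, i.e.,
not norm-continuous on its domain. -/
theorem M10_M01_trivial_and_norm_sub_eq_one_iff_graph_of_unbounded
    {H : Type*} [NormedAddCommGroup H] [InnerProductSpace ℂ H] [CompleteSpace H]
    (P Q : H →L[ℂ] H)
    (hP : IsIdempotentElem P) (hPsa : IsSelfAdjoint P)
    (hQ : IsIdempotentElem Q) (hQsa : IsSelfAdjoint Q) :
    ({f : H | P f = f ∧ Q f = 0} = {0} ∧ {f : H | P f = 0 ∧ Q f = f} = {0} ∧ ‖P - Q‖ = 1) ↔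
      ∃ X : H →ₗ.[ℂ] H,
        X.domain ≤ LinearMap.range (P : H →ₗ[ℂ] H) ∧
        (∀ x : X.domain, X x ∈ (LinearMap.range (P : H →ₗ[ℂ] H))ᗮ) ∧
        ((LinearMap.range (P : H →ₗ[ℂ] H) : Submodule ℂ H) : Set H) ⊆ closure (X.domain : Set H) ∧
        IsClosed (X.graph : Set (H × H)) ∧
        (¬ ∃ C : ℝ, ∀ x : X.domain, ‖X x‖ ≤ C * ‖(x : H)‖) ∧
        ((LinearMap.range (Q : H →ₗ[ℂ] H) : Submodule ℂ H) : Set H)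
          = {u : H | ∃ x : X.domain, u = (x : H) + X x} := by
  constructor
  · rintro ⟨h10, h01, hnorm⟩
    classical
    set R : Submodule ℂ H := LinearMap.range (Q : H →ₗ[ℂ] H) with hR
    have hRfix : ∀ g : R, Q (g : H) = (g : H) := fun g => (aux_mem_range hQ).mp g.2
    set dom : Submodule ℂ H := R.map (P : H →ₗ[ℂ] H) with hdomdef
    have hmemdom : ∀ g : R, P (g : H) ∈ dom := fun g =>
      Submodule.mem_map_of_mem g.2
    set e0 : R →ₗ[ℂ] dom := LinearMap.codRestrict dom
      ((P : H →ₗ[ℂ] H).comp R.subtype) (fun c => Submodule.mem_map_of_mem c.2) with he0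
    have he0app : ∀ g : R, (e0 g : H) = P (g : H) := fun g => rfl
    have hbij : Function.Bijective e0 := by
      constructor
      · intro g1 g2 hg
        have hPg : P ((g1 : H) - (g2 : H)) = 0 := by
          have h' : P (g1 : H) = P (g2 : H) := by
            have := congrArg (Subtype.val) hg
            rwa [he0app, he0app] at this
          rw [map_sub, h', sub_self]
        have hQg : Q ((g1 : H) - (g2 : H)) = (g1 : H) - (g2 : H) := by
          rw [map_sub, hRfix g1, hRfix g2]
        have hmem : ((g1 : H) - (g2 : H)) ∈ {f : H | P f = 0 ∧ Q f = f} := ⟨hPg, hQg⟩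
        rw [h01, Set.mem_singleton_iff] at hmem
        exact Subtype.ext (sub_eq_zero.mp hmem)
      · rintro ⟨u, hu⟩
        obtain ⟨g, hg, hPg⟩ := hu
        exact ⟨⟨g, hg⟩, Subtype.ext hPg⟩
    set e : R ≃ₗ[ℂ] dom := LinearEquiv.ofBijective e0 hbij with he
    have heapp : ∀ g : R, ((e g : dom) : H) = P (g : H) := fun g => he0app g
    set Xlin : dom →ₗ[ℂ] H :=
      (R.subtype - (P : H →ₗ[ℂ] H).comp R.subtype).comp e.symm.toLinearMap with hXlin
    set X : H →ₗ.[ℂ] H := ⟨dom, Xlin⟩ with hX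
    have hXapp : ∀ x : dom, X x = ((e.symm x : R) : H) - P ((e.symm x : R) : H) :=
      fun x => rfl
    have hxval : ∀ x : dom, (x : H) = P ((e.symm x : R) : H) := by
      intro x
      conv_lhs => rw [← e.apply_symm_apply x]
      exact heapp (e.symm x)
    have hXPg : ∀ g : R, X (⟨P (g : H), hmemdom g⟩ : dom) = (g : H) - P (g : H) := by
      intro g
      have h1 : (⟨P (g : H), hmemdom g⟩ : dom) = e g := Subtype.ext (heapp g).symm
      rw [h1, hXapp, e.symm_apply_apply]
    have hdomleP : dom ≤ LinearMap.range (P : H →ₗ[ℂ] H) := by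
      rintro u ⟨g, hg, rfl⟩
      exact ⟨g, rfl⟩
    have horthX : ∀ x : dom, X x ∈ (LinearMap.range (P : H →ₗ[ℂ] H))ᗮ := by
      intro x
      rw [hXapp]
      exact aux_sub_mem_orth hP hPsa _
    have hset : ((LinearMap.range (Q : H →ₗ[ℂ] H) : Submodule ℂ H) : Set H)
        = {u : H | ∃ x : dom, u = (x : H) + X x} := by
      ext u
      constructor
      · intro hu
        refine ⟨⟨P u, hmemdom ⟨u, hu⟩⟩, ?_⟩
        rw [hXPg ⟨u, hu⟩]
        abel
      · rintro ⟨x, rfl⟩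
        have hmem : ((e.symm x : R) : H) ∈ R := (e.symm x).2
        have : (x : H) + X x = ((e.symm x : R) : H) := by
          rw [hXapp x, ← hxval x]
          abel
        rw [this]
        exact hmem
    -- density of the domain in range P
    have hPclosed := aux_range_closed hP
    set K : Submodule ℂ H := dom.topologicalClosure with hK
    have hKle : K ≤ LinearMap.range (P : H →ₗ[ℂ] H) :=
      dom.topologicalClosure_minimal hdomleP hPclosed
    have hdenseP : ((LinearMap.range (P : H →ₗ[ℂ] H) : Submodule ℂ H) : Set H)
        ⊆ closure (dom : Set H) := by
      intro f hf
      have hf' : f ∈ LinearMap.range (P : H →ₗ[ℂ] H) := hf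
      have hf1K : (K.orthogonalProjectionOnto f : H) ∈ K := (K.orthogonalProjectionOnto f).2
      set z : H := f - (K.orthogonalProjectionOnto f : H) with hz
      have hzorth : z ∈ Kᗮ := K.sub_starProjection_mem_orthogonal f
      have hKorth : Kᗮ = domᗮ := by
        rw [hK, ← Submodule.orthogonal_orthogonal_eq_closure,
          Submodule.triorthogonal_eq_orthogonal]
      rw [hKorth] at hzorth
      have hPz : P z = z :=
        (aux_mem_range hP).mp (Submodule.sub_mem _ hf' (hKle hf1K))
      have hQz : Q z = 0 := by
        have h1 : ⟪P (Q z), z⟫ = 0 :=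
          hzorth _ (hmemdom ⟨Q z, ⟨z, rfl⟩⟩)
        rw [aux_symm hPsa, hPz] at h1
        have h3 : ⟪Q z, Q z⟫ = 0 := by
          rw [aux_symm hQsa, aux_idem_apply hQ, ← inner_conj_symm, h1, map_zero]
        exact inner_self_eq_zero.mp h3
      have hmem : z ∈ {f : H | P f = f ∧ Q f = 0} := ⟨hPz, hQz⟩
      rw [h10, Set.mem_singleton_iff] at hmem
      have hfK : f ∈ K := by
        have : f = (K.orthogonalProjectionOnto f : H) := by
          have := hmem
          rw [hz, sub_eq_zero] at this
          exact this
        rw [this]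
        exact hf1K
      rw [← Submodule.topologicalClosure_coe]
      exact hfK
    -- closedness of the graph
    have hRclosed : IsClosed (R : Set H) := aux_range_closed hQ
    haveI : CompleteSpace R := hRclosed.completeSpace_coe
    set T : R →L[ℂ] H × H :=
      (P.prod (ContinuousLinearMap.id ℂ H - P)).comp (Submodule.subtypeL R) with hT
    have hTapp : ∀ g : R, T g = (P (g : H), (g : H) - P (g : H)) := by
      intro g
      simp [hT, ContinuousLinearMap.sub_apply]
    have hanti : AntilipschitzWith 2 T := by
      refine T.antilipschitz_of_bound ?_
      intro g
      have hpy := aux_pyth hP hPsa (g : H)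
      have hn : ‖T g‖ = max ‖P (g : H)‖ ‖(g : H) - P (g : H)‖ := by
        rw [hTapp g, Prod.norm_def]
      have hm1 : ‖P (g : H)‖ ≤ ‖T g‖ := by rw [hn]; exact le_max_left _ _
      have hm2 : ‖(g : H) - P (g : H)‖ ≤ ‖T g‖ := by rw [hn]; exact le_max_right _ _
      show ‖(g : H)‖ ≤ 2 * ‖T g‖
      exact aux_two_max (norm_nonneg _) (norm_nonneg _) hpy hm1 hm2
        (norm_nonneg _) (norm_nonneg _)
    have hgraphclosed : IsClosed (X.graph : Set (H × H)) := by
      have hgraphset : (X.graph : Set (H × H)) = Set.range T := by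
        ext p
        simp only [SetLike.mem_coe, LinearPMap.mem_graph_iff, Set.mem_range]
        constructor
        · rintro ⟨x, hx1, hx2⟩
          refine ⟨e.symm x, ?_⟩
          rw [hTapp, ← hXapp x, ← hxval x]
          exact Prod.ext_iff.mpr ⟨hx1, hx2⟩
        · rintro ⟨g, rfl⟩
          refine ⟨⟨P (g : H), hmemdom g⟩, ?_, ?_⟩
          · rw [hTapp]
          · rw [hXPg g, hTapp]
      rw [hgraphset]
      exact hanti.isClosed_range T.uniformContinuous
    -- unboundedness
    have hunb : ¬ ∃ C : ℝ, ∀ x : dom, ‖X x‖ ≤ C * ‖(x : H)‖ := by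
      rintro ⟨C0, hC0⟩
      set C : ℝ := max C0 0 with hC
      have hCnn : 0 ≤ C := le_max_right _ _
      have hC' : ∀ x : dom, ‖X x‖ ≤ C * ‖(x : H)‖ := fun x =>
        (hC0 x).trans (mul_le_mul_of_nonneg_right (le_max_left _ _) (norm_nonneg _))
      set s : ℝ := Real.sqrt (1 + C ^ 2) with hs
      have hspos : 0 < s := Real.sqrt_pos.mpr (by positivity)
      have hs2 : s ^ 2 = 1 + C ^ 2 := Real.sq_sqrt (by positivity)
      -- dom is closed
      set T2 : R →L[ℂ] H := P.comp (Submodule.subtypeL R) with hT2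
      have hT2app : ∀ g : R, T2 g = P (g : H) := fun g => rfl
      have hanti2 : AntilipschitzWith ⟨s, hspos.le⟩ T2 := by
        refine T2.antilipschitz_of_bound ?_
        intro g
        have hb := hC' ⟨P (g : H), hmemdom g⟩
        rw [hXPg g] at hb
        have hb' : ‖(g : H) - P (g : H)‖ ≤ C * ‖P (g : H)‖ := hb
        have hpy := aux_pyth hP hPsa (g : H)
        show ‖(g : H)‖ ≤ s * ‖P (g : H)‖
        rw [hs]
        exact aux_sqrt_bound (norm_nonneg _) (norm_nonneg _) hCnn hpy hb' (norm_nonneg _)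
      have hdclosed : IsClosed (dom : Set H) := by
        have hrange : (dom : Set H) = Set.range T2 := by
          ext u
          constructor
          · rintro ⟨g, hg, rfl⟩
            exact ⟨⟨g, hg⟩, rfl⟩
          · rintro ⟨g, rfl⟩
            exact hmemdom g
        rw [hrange]
        exact hanti2.isClosed_range T2.uniformContinuous
      have hdomeq : dom = LinearMap.range (P : H →ₗ[ℂ] H) := by
        refine le_antisymm hdomleP ?_
        intro u hu
        have := hdenseP hu
        rwa [hdclosed.closure_eq] at this
      -- now prove ‖P - Q‖ ≤ C / s < 1, contradiction
      have hbound : ∀ f : H, ‖(P - Q) f‖ ≤ (C / s) * ‖f‖ := by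
        intro f
        have hd := aux_decomp (Q := Q) hP hPsa f
        set b : H := Q f - P (Q f) with hbdef
        set a : H := P (f - Q f) with hadef
        -- estimate for b
        have hxb := hXPg ⟨Q f, ⟨f, rfl⟩⟩
        have hbb : ‖b‖ ≤ C * ‖P (Q f)‖ := by
          rw [hbdef, ← hxb]
          exact hC' _
        have hpyQf := aux_pyth hP hPsa (Q f)
        rw [← hbdef] at hpyQf
        have hb2 : (1 + C ^ 2) * (‖b‖ * ‖b‖) ≤ C ^ 2 * (‖Q f‖ * ‖Q f‖) :=
          aux_sq1 (norm_nonneg _) hCnn hbb hpyQf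
        -- estimate for a
        have haP : a ∈ LinearMap.range (P : H →ₗ[ℂ] H) := ⟨f - Q f, rfl⟩
        have hadom : a ∈ dom := by rw [hdomeq]; exact haP
        set xa : dom := ⟨a, hadom⟩ with hxa
        set g : R := e.symm xa with hg
        have hg1 : a = P (g : H) := hxval xa
        have hg2 : X xa = (g : H) - P (g : H) := hXapp xa
        have hsum : a + X xa = (g : H) := by rw [hg2, ← hg1]; abel
        have hQh : Q (f - Q f) = 0 := by
          rw [map_sub, aux_idem_apply hQ, sub_self]
        have hsuminner : ⟪a + X xa, f - Q f⟫ = 0 := by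
          rw [hsum, ← hRfix g, aux_symm hQsa, hQh, inner_zero_right]
        have hPa : P a = a := (aux_mem_range hP).mp haP
        have hinnera : ⟪a, f - Q f⟫ = ⟪a, a⟫ := by
          conv_lhs => rw [← hPa]
          rw [aux_symm hPsa]
        have hXaPh : ⟪X xa, a⟫ = 0 := by
          rw [← inner_conj_symm, horthX xa a haP, map_zero]
        have hXah : ⟪X xa, f - Q f⟫ = ⟪X xa, (f - Q f) - a⟫ := by
          conv_rhs => rw [inner_sub_right]
          rw [hXaPh, sub_zero]
        have hkey : ⟪a, a⟫ = -⟪X xa, (f - Q f) - a⟫ := by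
          have := hsuminner
          rw [inner_add_left, hinnera, hXah] at this
          linear_combination this
        have hnorma : ‖a‖ * ‖a‖ ≤ C * ‖a‖ * ‖(f - Q f) - a‖ := by
          have h6 : ‖⟪X xa, (f - Q f) - a⟫‖ = (‖a‖ : ℝ) * ‖a‖ := by
            rw [← norm_neg, ← hkey, inner_self_eq_norm_sq_to_K, norm_pow]
            simp [Complex.norm_real, pow_two]
          rw [← h6]
          calc ‖⟪X xa, (f - Q f) - a⟫‖ ≤ ‖X xa‖ * ‖(f - Q f) - a‖ :=
                norm_inner_le_norm _ _
            _ ≤ (C * ‖a‖) * ‖(f - Q f) - a‖ :=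
                mul_le_mul_of_nonneg_right (hC' xa) (norm_nonneg _)
            _ = C * ‖a‖ * ‖(f - Q f) - a‖ := by ring
        have hpyh := aux_pyth hP hPsa (f - Q f)
        have hPh : P (f - Q f) = a := rfl
        rw [hPh] at hpyh
        have ha2 : (1 + C ^ 2) * (‖a‖ * ‖a‖) ≤ C ^ 2 * (‖f - Q f‖ * ‖f - Q f‖) :=
          aux_sq2 (norm_nonneg _) (norm_nonneg _) hCnn hnorma hpyh
        -- combine
        have hpyQ := aux_pyth hQ hQsa f
        exact aux_combine hd ha2 hb2 hpyQ hs2 hspos hCnn (norm_nonneg _) (norm_nonneg _)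
      have hnle : ‖P - Q‖ ≤ C / s :=
        ContinuousLinearMap.opNorm_le_bound _ (by positivity) hbound
      have hlt1 : C / s < 1 := by
        rw [div_lt_one hspos]
        exact Real.lt_sqrt hCnn |>.mpr (by linarith [sq_nonneg C])
      rw [hnorm] at hnle
      linarith
    exact ⟨X, hdomleP, horthX, hdenseP, hgraphclosed, hunb, hset⟩
  · rintro ⟨X, hdom, horth, hdense, hgraph, hunb, hQX⟩
    -- basic facts
    have hPx : ∀ x : X.domain, P (x : H) = (x : H) := fun x =>
      (aux_mem_range hP).mp (hdom x.2)
    have hPXx : ∀ x : X.domain, P (X x) = 0 := fun x =>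
      aux_apply_orth_eq_zero hP hPsa (horth x)
    have hmemQ : ∀ x : X.domain, (x : H) + X x ∈ LinearMap.range (Q : H →ₗ[ℂ] H) := by
      intro x
      have : (x : H) + X x ∈ {u : H | ∃ x : X.domain, u = (x : H) + X x} := ⟨x, rfl⟩
      rw [← hQX] at this
      exact this
    have hQfix : ∀ x : X.domain, Q ((x : H) + X x) = (x : H) + X x := fun x =>
      (aux_mem_range hQ).mp (hmemQ x)
    have hM01 : {f : H | P f = 0 ∧ Q f = f} = {0} := by
      ext f
      simp only [Set.mem_setOf_eq, Set.mem_singleton_iff]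
      constructor
      · rintro ⟨hPf, hQf⟩
        have hfR : f ∈ LinearMap.range (Q : H →ₗ[ℂ] H) := ⟨f, hQf⟩
        have : f ∈ {u : H | ∃ x : X.domain, u = (x : H) + X x} := by
          rw [← hQX]; exact hfR
        obtain ⟨x, hx⟩ := this
        have hx0 : (x : H) = 0 := by
          have := congrArg P hx
          rw [hPf, map_add, hPx x, hPXx x, add_zero] at this
          exact this.symm
        have hxx : x = 0 := Subtype.ext hx0
        rw [hx, hxx] at *
        simpa using hx
      · rintro rfl; simp
    have hM10 : {f : H | P f = f ∧ Q f = 0} = {0} := by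
      ext f
      simp only [Set.mem_setOf_eq, Set.mem_singleton_iff]
      constructor
      · rintro ⟨hPf, hQf⟩
        have hforth : f ∈ X.domainᗮ := by
          intro u hu
          have hinner : ∀ x : X.domain, ⟪(x : H) + X x, f⟫ = 0 := by
            intro x
            calc ⟪(x : H) + X x, f⟫ = ⟪Q ((x : H) + X x), f⟫ := by rw [hQfix x]
              _ = ⟪(x : H) + X x, Q f⟫ := aux_symm hQsa _ _
              _ = 0 := by rw [hQf, inner_zero_right]
          have hXf : ⟪X ⟨u, hu⟩, f⟫ = 0 := by
            have h1 : ⟪f, X ⟨u, hu⟩⟫ = 0 := horth ⟨u, hu⟩ f ⟨f, hPf⟩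
            rw [← inner_conj_symm, h1, map_zero]
          have := hinner ⟨u, hu⟩
          rw [inner_add_left, hXf, add_zero] at this
          exact this
        have hfc : f ∈ X.domainᗮᗮ := by
          rw [Submodule.orthogonal_orthogonal_eq_closure]
          have h1 : f ∈ closure (X.domain : Set H) := hdense ⟨f, hPf⟩
          rw [← Submodule.topologicalClosure_coe] at h1
          exact h1
        have : ⟪f, f⟫ = 0 := hfc f hforth
        exact inner_self_eq_zero.mp this
      · rintro rfl; simp
    refine ⟨hM10, hM01, ?_⟩
    have hle := aux_norm_sub_le_one hP hPsa hQ hQsa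
    rcases lt_or_eq_of_le hle with hlt | heq
    · exfalso
      apply hunb
      set k := ‖P - Q‖ with hk
      have hk0 : 0 ≤ k := norm_nonneg _
      have htpos : 0 < Real.sqrt (1 - k ^ 2) := Real.sqrt_pos.mpr (by nlinarith)
      set t := Real.sqrt (1 - k ^ 2) with ht
      have ht2 : t ^ 2 = 1 - k ^ 2 := Real.sq_sqrt (by nlinarith)
      refine ⟨k / t, fun x => ?_⟩
      have h1 : (P - Q) ((x : H) + X x) = -(X x) := by
        have hPsum : P ((x : H) + X x) = (x : H) := by
          rw [map_add, hPx x, hPXx x, add_zero]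
        rw [ContinuousLinearMap.sub_apply, hPsum, hQfix x]
        abel
      have h2 : ‖X x‖ ≤ k * ‖(x : H) + X x‖ := by
        have := (P - Q).le_opNorm ((x : H) + X x)
        rw [h1, norm_neg] at this
        exact this
      have hpy : ‖(x : H) + X x‖ * ‖(x : H) + X x‖
          = ‖(x : H)‖ * ‖(x : H)‖ + ‖X x‖ * ‖X x‖ :=
        norm_add_sq_eq_norm_sq_add_norm_sq_of_inner_eq_zero _ _
          (horth x (x : H) (hdom x.2))
      rw [div_mul_eq_mul_div, le_div_iff₀ htpos]
      refine aux_le_of_sq_le_sq (by positivity) (by positivity) ?_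
      nlinarith [norm_nonneg (X x), norm_nonneg ((x : H) + X x),
        mul_le_mul h2 h2 (norm_nonneg _) (by positivity : (0:ℝ) ≤ k * ‖(x : H) + X x‖)]
    · exact heq
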